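/- Let F be a nonzero Laurent polynomial in k variables, and let A ∈ ℤ^{ℓ'×k} have rank ℓ. Suppose H ∈ ℤ^{ℓ×k} is such that A = V H' where H' consists of H on top of (ℓ'−ℓ) zero rows and V ∈ ℤ^{ℓ'×ℓ'} is nonsingular. Then m(F_A) = m(F_H). -/

import Mathlib

open MeasureTheory Set
instance real_fact_zero_lt_one : Fact ((0:ℝ) < 1) := ⟨one_pos⟩

noncomputable section

/-- A Laurent polynomial in `k` variables, given by its finitely supported
coefficient function on exponent vectors in `ℤ^k`. -/
abbrev LPoly (k : ℕ) := (Fin k → ℤ) →₀ ℂ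

/-- Evaluation of a Laurent polynomial at a point of `ℂ^k`. -/
def evalT {k : ℕ} (F : LPoly k) (z : Fin k → ℂ) : ℂ :=
  ∑ e ∈ F.support, F e * ∏ i, z i ^ (e i)

/-- The point of the `k`-torus with angles `t`. -/
def torusPt {k : ℕ} (t : Fin k → ℝ) : Fin k → ℂ :=
  fun i => Complex.exp (2 * Real.pi * Complex.I * (t i))

/-- The logarithmic Mahler measure of a Laurent polynomial in `k` variables. -/
def mm {k : ℕ} (F : LPoly k) : ℝ :=
  ∫ t in Set.Icc (0 : Fin k → ℝ) 1, Real.log ‖evalT F (torusPt t)‖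

/-- The exponent substitution attached to an integer matrix `A ∈ ℤ^{ℓ×k}`. -/
def substExp {l k : ℕ} (A : Matrix (Fin l) (Fin k) ℤ) (e : Fin k → ℤ) : Fin l → ℤ :=
  fun i => ∑ j, A i j * e j

/-- `substM A F` is the Laurent polynomial `F_A(z) = F(z^A)` in `ℓ` variables. -/
def substM {l k : ℕ} (A : Matrix (Fin l) (Fin k) ℤ) (F : LPoly k) : LPoly l :=
  Finsupp.mapDomain (substExp A) F

/-- A one-row integer matrix from a vector `r ∈ ℤ^k`. -/
def rowMat {k : ℕ} (r : Fin k → ℤ) : Matrix (Fin 1) (Fin k) ℤ :=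
  Matrix.of fun _ j => r j

/-- The set `ℳ(F)` of Mahler measures of all the nonzero `F_A`. -/
def Mset {k : ℕ} (F : LPoly k) : Set ℝ :=
  { x | ∃ (l : ℕ) (A : Matrix (Fin l) (Fin k) ℤ), substM A F ≠ 0 ∧ mm (substM A F) = x }

/-- The set `ℳ₁(F)` of Mahler measures of the nonzero one-variable substitutions `F_r`. -/
def M1set {k : ℕ} (F : LPoly k) : Set ℝ :=
  { x | ∃ r : Fin k → ℤ, substM (rowMat r) F ≠ 0 ∧ mm (substM (rowMat r) F) = x }

-- algebra lemmas
lemma substExp_comp {l' l k : ℕ} (V : Matrix (Fin l') (Fin l) ℤ) (M : Matrix (Fin l) (Fin k) ℤ)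
    (e : Fin k → ℤ) : substExp (V * M) e = substExp V (substExp M e) := by
  funext i
  simp only [substExp, Matrix.mul_apply, Finset.sum_mul, Finset.mul_sum]
  rw [Finset.sum_comm]
  exact Finset.sum_congr rfl fun j _ => Finset.sum_congr rfl fun m _ => by ring

lemma substM_mul {l' l k : ℕ} (V : Matrix (Fin l') (Fin l) ℤ) (M : Matrix (Fin l) (Fin k) ℤ)
    (F : LPoly k) : substM (V * M) F = substM V (substM M F) := by
  unfold substM
  rw [← Finsupp.mapDomain_comp]
  congr 1
  funext e
  exact substExp_comp V M e

lemma evalT_substM {l k : ℕ} (M : Matrix (Fin l) (Fin k) ℤ) (F : LPoly k) (z : Fin l → ℂ) :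
    evalT (substM M F) z = ∑ e ∈ F.support, F e * ∏ i, z i ^ (substExp M e i) := by
  have h : evalT (substM M F) z
      = (Finsupp.mapDomain (substExp M) F).sum fun e c => c * ∏ i, z i ^ (e i) := rfl
  have h2 : (Finsupp.mapDomain (substExp M) F).sum (fun e c => c * ∏ i, z i ^ (e i))
      = F.sum fun e c => c * ∏ i, z i ^ (substExp M e i) :=
    Finsupp.sum_mapDomain_index (fun _ => zero_mul _) (fun _ m₁ m₂ => add_mul _ _ _)
  rw [h, h2, Finsupp.sum]

abbrev Torus (n : ℕ) := Fin n → AddCircle (1:ℝ)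

instance : IsProbabilityMeasure (volume : Measure (AddCircle (1:ℝ))) :=
  ⟨by rw [AddCircle.measure_univ]; norm_num⟩

def pmap {n : ℕ} (t : Fin n → ℝ) : Torus n := fun i => (t i : AddCircle (1:ℝ))

def Phi {n : ℕ} (G : LPoly n) (x : Torus n) : ℂ :=
  ∑ e ∈ G.support, G e * ∏ i, (AddCircle.toCircle (x i) : ℂ) ^ (e i)

lemma toCircle_coe_eq (r : ℝ) :
    ((AddCircle.toCircle (r : AddCircle (1:ℝ)) : Circle) : ℂ)
      = Complex.exp (2 * Real.pi * Complex.I * r) := by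
  rw [AddCircle.toCircle_apply_mk, Circle.coe_exp]
  congr 1
  push_cast
  ring

lemma Phi_pmap {n : ℕ} (G : LPoly n) (t : Fin n → ℝ) :
    Phi G (pmap t) = evalT G (torusPt t) := by
  unfold Phi evalT pmap torusPt
  refine Finset.sum_congr rfl fun e _ => ?_
  congr 1
  refine Finset.prod_congr rfl fun i _ => ?_
  rw [toCircle_coe_eq]

lemma continuous_Phi {n : ℕ} (G : LPoly n) : Continuous (Phi G) := by
  refine continuous_finset_sum _ fun e _ => Continuous.mul continuous_const ?_
  refine continuous_finset_prod _ fun i _ => ?_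
  refine Continuous.zpow₀ ?_ _ fun x => Or.inl (Circle.coe_ne_zero _)
  exact continuous_subtype_val.comp (AddCircle.continuous_toCircle.comp (continuous_apply i))

lemma measurable_logPhi {n : ℕ} (G : LPoly n) :
    Measurable fun x : Torus n => Real.log ‖Phi G x‖ :=
  Real.measurable_log.comp (continuous_Phi G).norm.measurable

lemma restrict_pi_univ {n : ℕ} {s : Set ℝ} (hs : MeasurableSet s) :
    (volume : Measure (Fin n → ℝ)).restrict (Set.pi Set.univ fun _ => s)
      = Measure.pi fun _ : Fin n => (volume : Measure ℝ).restrict s := by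
  refine Measure.pi_eq (μ := fun _ : Fin n => (volume : Measure ℝ).restrict s) (fun t ht => ?_) |>.symm
  rw [Measure.restrict_apply (MeasurableSet.univ_pi ht), ← Set.pi_inter_distrib,
    volume_pi_pi]
  exact Finset.prod_congr rfl fun i _ => (Measure.restrict_apply (ht i)).symm

lemma mp_pmap {n : ℕ} :
    MeasurePreserving (pmap (n := n))
      ((volume : Measure (Fin n → ℝ)).restrict (Set.Icc 0 1))
      (volume : Measure (Torus n)) := by
  have h1 : (volume : Measure (Fin n → ℝ)).restrict (Set.Icc 0 1)
      = (volume : Measure (Fin n → ℝ)).restrict (Set.pi Set.univ fun _ => Set.Ioc (0:ℝ) 1) := by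
    refine (Measure.restrict_congr_set ?_).symm
    exact Measure.univ_pi_Ioc_ae_eq_Icc
  rw [h1, restrict_pi_univ measurableSet_Ioc, volume_pi]
  refine measurePreserving_pi (fun _ : Fin n => (volume : Measure ℝ).restrict (Set.Ioc 0 1))
    (fun _ : Fin n => (volume : Measure (AddCircle (1:ℝ)))) fun i => ?_
  simpa using AddCircle.measurePreserving_mk (1:ℝ) 0

lemma integral_comp_mp {α β : Type*} [MeasurableSpace α] [MeasurableSpace β]
    {μ : Measure α} {ν : Measure β} {q : α → β} (hq : MeasurePreserving q μ ν)
    {f : β → ℝ} (hf : Measurable f) :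
    ∫ x, f (q x) ∂μ = ∫ y, f y ∂ν := by
  rw [← hq.map_eq, integral_map hq.aemeasurable hf.aestronglyMeasurable]

lemma mm_eq_torus_integral {n : ℕ} (G : LPoly n) :
    mm G = ∫ x, Real.log ‖Phi G x‖ ∂(volume : Measure (Torus n)) := by
  rw [← integral_comp_mp mp_pmap (measurable_logPhi G)]
  unfold mm
  refine setIntegral_congr_fun measurableSet_Icc fun t _ => ?_
  rw [Phi_pmap]

/-- the AddCircle coe as a hom -/
def rmk : ℝ →+ AddCircle (1:ℝ) := QuotientAddGroup.mk' (AddSubgroup.zmultiples (1:ℝ))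

lemma rmk_apply (r : ℝ) : rmk r = (r : AddCircle (1:ℝ)) := rfl

/-- the endomorphism of the torus attached to a square integer matrix -/
def mapT {n : ℕ} (W : Matrix (Fin n) (Fin n) ℤ) : Torus n →+ Torus n where
  toFun x := fun i => ∑ j, W i j • x j
  map_zero' := by funext i; simp
  map_add' x y := by funext i; simp [smul_add, Finset.sum_add_distrib]

lemma mapT_pmap {n : ℕ} (W : Matrix (Fin n) (Fin n) ℤ) (t : Fin n → ℝ) :
    mapT W (pmap t) = pmap (fun i => ∑ j, (W i j : ℝ) * t j) := by
  funext i
  show ∑ j, W i j • ((t j : AddCircle (1:ℝ)))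
      = ((∑ j, (W i j : ℝ) * t j : ℝ) : AddCircle (1:ℝ))
  rw [← rmk_apply, map_sum]
  refine Finset.sum_congr rfl fun j _ => ?_
  rw [← zsmul_eq_mul, map_zsmul, rmk_apply]

lemma continuous_mapT {n : ℕ} (W : Matrix (Fin n) (Fin n) ℤ) : Continuous (mapT W) := by
  show Continuous fun (x : Torus n) (i : Fin n) => ∑ j, W i j • x j
  refine continuous_pi fun i => continuous_finset_sum _ fun j _ => ?_
  exact (continuous_zsmul (W i j)).comp (continuous_apply j)

lemma surjective_mapT {n : ℕ} (W : Matrix (Fin n) (Fin n) ℤ) (hW : W.det ≠ 0) :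
    Function.Surjective (mapT W) := by
  intro y
  choose u hu using fun i => QuotientAddGroup.mk_surjective (y i)
  set Wr : Matrix (Fin n) (Fin n) ℝ := W.map ((↑) : ℤ → ℝ) with hWr
  have hdet : Wr.det ≠ 0 := by
    have h : Wr.det = ((W.det : ℝ)) := by
      rw [hWr]
      exact (RingHom.map_det (Int.castRingHom ℝ) W).symm
    rw [h]
    exact_mod_cast hW
  refine ⟨pmap (Wr⁻¹.mulVec u), ?_⟩
  have key : (fun i => ∑ j, (W i j : ℝ) * (Wr⁻¹.mulVec u) j) = u := by
    have h2 : (fun i => ∑ j, (W i j : ℝ) * (Wr⁻¹.mulVec u) j) = Wr.mulVec (Wr⁻¹.mulVec u) := by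
      funext i
      simp [Matrix.mulVec, dotProduct, hWr, Matrix.map_apply]
    rw [h2, Matrix.mulVec_mulVec, Matrix.mul_nonsing_inv _ (isUnit_iff_ne_zero.mpr hdet),
      Matrix.one_mulVec]
  rw [mapT_pmap, key]
  funext i
  exact hu i

lemma mp_mapT {n : ℕ} (W : Matrix (Fin n) (Fin n) ℤ) (hW : W.det ≠ 0) :
    MeasurePreserving (mapT W) (volume : Measure (Torus n)) volume :=
  AddMonoidHom.measurePreserving (continuous_mapT W) (surjective_mapT W hW) rfl

lemma prod_exp_zpow {n : ℕ} (t : Fin n → ℝ) (c : Fin n → ℤ) :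
    ∏ i, Complex.exp (2 * Real.pi * Complex.I * (t i)) ^ (c i)
      = Complex.exp (2 * Real.pi * Complex.I * (∑ i, (c i : ℝ) * t i)) := by
  have h : ∀ i : Fin n, Complex.exp (2 * Real.pi * Complex.I * (t i)) ^ (c i)
      = Complex.exp ((c i : ℂ) * (2 * Real.pi * Complex.I * (t i))) := by
    intro i
    rw [← Complex.exp_int_mul]
  rw [Finset.prod_congr rfl fun i _ => h i, ← Complex.exp_sum]
  congr 1
  push_cast
  rw [Finset.mul_sum]
  exact Finset.sum_congr rfl fun i _ => by ring

/-- pointwise identity for square substitution -/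
lemma evalT_substM_torusPt {n k : ℕ} (W : Matrix (Fin n) (Fin k) ℤ) (G : LPoly k)
    (t : Fin n → ℝ) :
    evalT (substM W G) (torusPt t)
      = evalT G (torusPt (fun j => ∑ i, (W i j : ℝ) * t i)) := by
  rw [evalT_substM]
  unfold evalT torusPt
  refine Finset.sum_congr rfl fun e _ => ?_
  congr 1
  rw [prod_exp_zpow, prod_exp_zpow]
  congr 1
  push_cast [substExp]
  simp only [Finset.sum_mul, Finset.mul_sum]
  rw [Finset.sum_comm]
  exact Finset.sum_congr rfl fun i _ => Finset.sum_congr rfl fun j _ => by ring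

lemma mmV {n : ℕ} (V : Matrix (Fin n) (Fin n) ℤ) (hV : V.det ≠ 0) (G : LPoly n) :
    mm (substM V G) = mm G := by
  have hVt : V.transpose.det ≠ 0 := by rwa [Matrix.det_transpose]
  have key : ∀ t : Fin n → ℝ,
      Real.log ‖evalT (substM V G) (torusPt t)‖
        = Real.log ‖Phi G (mapT V.transpose (pmap t))‖ := by
    intro t
    rw [evalT_substM_torusPt, mapT_pmap, Phi_pmap]
    simp [Matrix.transpose_apply]
  have hmeas : Measurable fun x : Torus n => Real.log ‖Phi G (mapT V.transpose x)‖ :=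
    (measurable_logPhi G).comp (continuous_mapT _).measurable
  calc mm (substM V G)
      = ∫ t in Set.Icc (0 : Fin n → ℝ) 1, Real.log ‖Phi G (mapT V.transpose (pmap t))‖ := by
        unfold mm
        exact setIntegral_congr_fun measurableSet_Icc fun t _ => key t
    _ = ∫ x, Real.log ‖Phi G (mapT V.transpose x)‖ ∂(volume : Measure (Torus n)) :=
        integral_comp_mp mp_pmap hmeas
    _ = ∫ x, Real.log ‖Phi G x‖ ∂(volume : Measure (Torus n)) :=
        integral_comp_mp (mp_mapT _ hVt) (measurable_logPhi G)
    _ = mm G := (mm_eq_torus_integral G).symm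

/-- projection of the torus onto the first `l` coordinates -/
def projT {l l' : ℕ} (hll : l ≤ l') : Torus l' →+ Torus l where
  toFun x := fun i => x (Fin.castLE hll i)
  map_zero' := rfl
  map_add' _ _ := rfl

lemma continuous_projT {l l' : ℕ} (hll : l ≤ l') : Continuous (projT hll) := by
  show Continuous fun (x : Torus l') (i : Fin l) => x (Fin.castLE hll i)
  exact continuous_pi fun i => continuous_apply _

lemma surjective_projT {l l' : ℕ} (hll : l ≤ l') : Function.Surjective (projT hll) := by
  intro y
  refine ⟨fun j => if h : (j : ℕ) < l then y ⟨j, h⟩ else 0, ?_⟩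
  funext i
  show (if h : ((Fin.castLE hll i : Fin l') : ℕ) < l then y ⟨_, h⟩ else 0) = y i
  rw [dif_pos (show ((Fin.castLE hll i : Fin l') : ℕ) < l from i.isLt)]
  exact congrArg y (Fin.ext rfl)

lemma mp_projT {l l' : ℕ} (hll : l ≤ l') :
    MeasurePreserving (projT hll) (volume : Measure (Torus l')) (volume : Measure (Torus l)) :=
  AddMonoidHom.measurePreserving (continuous_projT hll) (surjective_projT hll) (by simp)

lemma substExp_H' {l l' k : ℕ} (H : Matrix (Fin l) (Fin k) ℤ)
    (H' : Matrix (Fin l') (Fin k) ℤ)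
    (hH' : ∀ i : Fin l', H' i = if h : (i : ℕ) < l then H ⟨i, h⟩ else 0)
    (e : Fin k → ℤ) (i : Fin l') :
    substExp H' e i = if h : (i : ℕ) < l then substExp H e ⟨i, h⟩ else 0 := by
  unfold substExp
  by_cases h : (i : ℕ) < l
  · rw [dif_pos h]
    refine Finset.sum_congr rfl fun j _ => ?_
    rw [show H' i j = H ⟨i, h⟩ j by rw [hH' i, dif_pos h]]
  · rw [dif_neg h]
    refine Finset.sum_eq_zero fun j _ => ?_
    rw [show H' i j = 0 by rw [hH' i, dif_neg h]; rfl, zero_mul]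

lemma evalT_H'_torusPt {l l' k : ℕ} (hll : l ≤ l') (F : LPoly k)
    (H : Matrix (Fin l) (Fin k) ℤ) (H' : Matrix (Fin l') (Fin k) ℤ)
    (hH' : ∀ i : Fin l', H' i = if h : (i : ℕ) < l then H ⟨i, h⟩ else 0)
    (t : Fin l' → ℝ) :
    evalT (substM H' F) (torusPt t)
      = evalT (substM H F) (torusPt (fun i => t (Fin.castLE hll i))) := by
  rw [evalT_substM, evalT_substM]
  refine Finset.sum_congr rfl fun e _ => ?_
  congr 1
  unfold torusPt
  have hstep : ∀ i : Fin l, substExp H' e (Fin.castLE hll i) = substExp H e i := by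
    intro i
    rw [substExp_H' H H' hH' e,
      dif_pos (show ((Fin.castLE hll i : Fin l') : ℕ) < l from i.isLt)]
    exact congrArg (substExp H e) (Fin.ext rfl)
  calc ∏ i : Fin l', Complex.exp (2 * Real.pi * Complex.I * (t i)) ^ (substExp H' e i)
      = ∏ i ∈ Finset.univ.map (Fin.castLEEmb hll),
          Complex.exp (2 * Real.pi * Complex.I * (t i)) ^ (substExp H' e i) := by
        refine (Finset.prod_subset (Finset.subset_univ _) fun i _ hi => ?_).symm
        have hi' : ¬ ((i : ℕ) < l) := fun h =>
          hi (Finset.mem_map.2 ⟨⟨i, h⟩, Finset.mem_univ _, Fin.ext rfl⟩)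
        rw [substExp_H' H H' hH' e i, dif_neg hi', zpow_zero]
    _ = ∏ i : Fin l, Complex.exp (2 * Real.pi * Complex.I * (t (Fin.castLE hll i)))
          ^ (substExp H' e (Fin.castLE hll i)) := Finset.prod_map _ _ _
    _ = ∏ i : Fin l, Complex.exp (2 * Real.pi * Complex.I * (t (Fin.castLE hll i)))
          ^ (substExp H e i) := Finset.prod_congr rfl fun i _ => by rw [hstep]

lemma mmProj {l l' k : ℕ} (hll : l ≤ l') (F : LPoly k)
    (H : Matrix (Fin l) (Fin k) ℤ) (H' : Matrix (Fin l') (Fin k) ℤ)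
    (hH' : ∀ i : Fin l', H' i = if h : (i : ℕ) < l then H ⟨i, h⟩ else 0) :
    mm (substM H' F) = mm (substM H F) := by
  have hproj : ∀ t : Fin l' → ℝ, projT hll (pmap t) = pmap (fun i => t (Fin.castLE hll i)) := by
    intro t; rfl
  have key : ∀ t : Fin l' → ℝ,
      Real.log ‖evalT (substM H' F) (torusPt t)‖
        = Real.log ‖Phi (substM H F) (projT hll (pmap t))‖ := by
    intro t
    rw [evalT_H'_torusPt hll F H H' hH', hproj, Phi_pmap]
  have hmeas : Measurable fun x : Torus l' => Real.log ‖Phi (substM H F) (projT hll x)‖ :=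
    (measurable_logPhi _).comp (continuous_projT hll).measurable
  calc mm (substM H' F)
      = ∫ t in Set.Icc (0 : Fin l' → ℝ) 1,
          Real.log ‖Phi (substM H F) (projT hll (pmap t))‖ := by
        unfold mm
        exact setIntegral_congr_fun measurableSet_Icc fun t _ => key t
    _ = ∫ x, Real.log ‖Phi (substM H F) (projT hll x)‖ ∂(volume : Measure (Torus l')) :=
        integral_comp_mp mp_pmap hmeas
    _ = ∫ x, Real.log ‖Phi (substM H F) x‖ ∂(volume : Measure (Torus l)) :=
        integral_comp_mp (mp_projT hll) (measurable_logPhi _)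
    _ = mm (substM H F) := (mm_eq_torus_integral _).symm

/-- If `A = V H'` where `H'` is `H` stacked on top of zero rows and `V` is
nonsingular, then `m(F_A) = m(F_H)`. -/
theorem mm_substM_eq_of_SHNF_factorization {l l' k : ℕ} (hll : l ≤ l')
    (F : LPoly k) (hF : F ≠ 0)
    (A : Matrix (Fin l') (Fin k) ℤ) (H : Matrix (Fin l) (Fin k) ℤ)
    (H' : Matrix (Fin l') (Fin k) ℤ)
    (hH' : ∀ i : Fin l', H' i = if h : (i : ℕ) < l then H ⟨i, h⟩ else 0)
    (V : Matrix (Fin l') (Fin l') ℤ) (hV : V.det ≠ 0) (hA : A = V * H') :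
    mm (substM A F) = mm (substM H F) := by
  rw [hA, substM_mul, mmV V hV, mmProj hll F H H' hH']
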